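/- Let w : μ ↦ μ' and w' : μ' ↦ μ'' be composable evolutionary processes between finite measures, with relative fitness functions U = W/E[W] and U' = W'/E'[W'] respectively, where U has finite variance. Then 0 = var(U) + E[(⟨U'⟩_w − U)·U], i.e. the environmental change of relative fitness equals minus its variance: E[Δ_w(U,U')·U] = −var(U). -/

import Mathlib

open MeasureTheory Real Set

/-- Generalized Fisher fundamental theorem: for composable evolutionary processes
`w : μ ↦ μ'` and `w' : μ' ↦ μ''` with relative fitnesses `U` and `U'`,
the total change of relative fitness vanishes, so
`0 = var(U) + E[(⟨U'⟩_w − U)·U]`, i.e. the environmental change of relative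
fitness equals minus its variance. -/
theorem fisher_fundamental_theorem
    {I I' I'' : Type*} [MeasurableSpace I] [MeasurableSpace I'] [MeasurableSpace I'']
    (μ : Measure I) (μ' : Measure I') (μ'' : Measure I'')
    [IsFiniteMeasure μ] [IsFiniteMeasure μ'] [IsFiniteMeasure μ'']
    (hN : 0 < (μ univ).toReal) (hN' : 0 < (μ' univ).toReal) (hN'' : 0 < (μ'' univ).toReal)
    (w : I → Measure I') (w' : I' → Measure I'')
    (hwfin : ∀ i, IsFiniteMeasure (w i)) (hw'fin : ∀ i', IsFiniteMeasure (w' i'))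
    (hwm : ∀ B : Set I', MeasurableSet B → Measurable fun i => w i B)
    (hw'm : ∀ C : Set I'', MeasurableSet C → Measurable fun i' => w' i' C)
    (hdis : ∀ B : Set I', MeasurableSet B → μ' B = ∫⁻ i, w i B ∂μ)
    (hdis' : ∀ C : Set I'', MeasurableSet C → μ'' C = ∫⁻ i', w' i' C ∂μ') :
    let N := (μ univ).toReal
    let N' := (μ' univ).toReal
    let N'' := (μ'' univ).toReal
    let U : I → ℝ := fun i => (w i univ).toReal / (N' / N)
    let U' : I' → ℝ := fun i' => (w' i' univ).toReal / (N'' / N')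
    let lavg : I → ℝ := fun i => (∫ i', U' i' ∂(w i)) / (w i univ).toReal
    Integrable (fun i => (U i) ^ 2) μ →
    Integrable (fun i => (lavg i - U i) * U i) μ →
    0 = (∫ i, (U i - 1) ^ 2 ∂μ) / N + (∫ i, (lavg i - U i) * U i ∂μ) / N := by

  intro N N' N'' U U' lavg hU2 hLU
  have hNne : N ≠ 0 := ne_of_gt hN
  have hN'ne : N' ≠ 0 := ne_of_gt hN'
  have hN''ne : N'' ≠ 0 := ne_of_gt hN''
  have hwMeas : Measurable w :=
    Measure.measurable_of_measurable_coe w fun B hB => hwm B hB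
  have hbind : μ' = μ.bind w := by
    ext B hB
    rw [Measure.bind_apply hB hwMeas.aemeasurable, hdis B hB]
  have hg : Measurable (fun i' => w' i' univ) := hw'm univ MeasurableSet.univ
  set F : I → ENNReal := fun i => ∫⁻ i', w' i' univ ∂(w i) with hF_def
  have hF : Measurable F := (Measure.measurable_lintegral hg).comp hwMeas
  have hswap : ∫⁻ i, F i ∂μ = μ'' univ := by
    rw [hdis' univ MeasurableSet.univ, hbind,
      Measure.lintegral_bind hwMeas.aemeasurable hg.aemeasurable]
  have hFae : ∀ᵐ i ∂μ, F i < ⊤ :=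
    ae_lt_top hF (by rw [hswap]; exact measure_ne_top _ _)
  have hinner : ∀ i, (∫ i', U' i' ∂(w i)) = (F i).toReal / (N'' / N') := by
    intro i
    have hti : ∫ i', (w' i' univ).toReal ∂(w i) = (F i).toReal :=
      integral_toReal hg.aemeasurable
        (ae_of_all _ fun i' => (hw'fin i').measure_univ_lt_top)
    show ∫ i', (w' i' univ).toReal / (N'' / N') ∂(w i) = (F i).toReal / (N'' / N')
    rw [integral_div, hti]
  have hkey : ∀ i, lavg i * U i = (F i).toReal / (N'' / N' * (N' / N)) := by
    intro i
    show (∫ i', U' i' ∂(w i)) / (w i univ).toReal * ((w i univ).toReal / (N' / N))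
        = (F i).toReal / (N'' / N' * (N' / N))
    rw [hinner i]
    by_cases h0 : (w i univ).toReal = 0
    · have hw0 : w i = 0 := by
        have := hwfin i
        have h1 : w i univ = 0 := by
          rcases (ENNReal.toReal_eq_zero_iff _).mp h0 with h | h
          · exact h
          · exact absurd h (measure_ne_top _ _)
        exact Measure.measure_univ_eq_zero.mp h1
      have hFi : F i = 0 := by simp [hF_def, hw0]
      simp [h0, hFi]
    · field_simp
  have hIF : Integrable (fun i => (F i).toReal) μ :=
    integrable_toReal_of_lintegral_ne_top hF.aemeasurable
      (by rw [hswap]; exact measure_ne_top _ _)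
  have hintLU : ∫ i, lavg i * U i ∂μ = N := by
    have h1 : ∫ i, (F i).toReal ∂μ = N'' := by
      rw [integral_toReal hF.aemeasurable hFae, hswap]
    calc ∫ i, lavg i * U i ∂μ
        = ∫ i, (F i).toReal / (N'' / N' * (N' / N)) ∂μ :=
          integral_congr_ae (ae_of_all _ hkey)
      _ = (∫ i, (F i).toReal ∂μ) / (N'' / N' * (N' / N)) := integral_div _ _
      _ = N'' / (N'' / N' * (N' / N)) := by rw [h1]
      _ = N := by field_simp
  have hIlu : Integrable (fun i => lavg i * U i) μ := by
    have h : (fun i => lavg i * U i) = fun i => (lavg i - U i) * U i + (U i) ^ 2 := by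
      funext i; ring
    rw [h]; exact hLU.add hU2
  have hW : Measurable (fun i => (w i univ)) := hwm univ MeasurableSet.univ
  have hUintg : Integrable U μ := by
    have h : Integrable (fun i => (w i univ).toReal) μ :=
      integrable_toReal_of_lintegral_ne_top hW.aemeasurable
        (by rw [← hdis univ MeasurableSet.univ]; exact measure_ne_top _ _)
    exact h.div_const _
  have hUint : ∫ i, U i ∂μ = N := by
    have h1 : ∫ i, (w i univ).toReal ∂μ = N' := by
      rw [integral_toReal hW.aemeasurable
        (ae_of_all _ fun i => (hwfin i).measure_univ_lt_top),
        ← hdis univ MeasurableSet.univ]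
    show ∫ i, (w i univ).toReal / (N' / N) ∂μ = N
    rw [integral_div, h1]
    field_simp
  have e1 : ∫ i, (lavg i - U i) * U i ∂μ = N - ∫ i, (U i) ^ 2 ∂μ := by
    have h : (fun i => (lavg i - U i) * U i) = fun i => lavg i * U i - (U i) ^ 2 := by
      funext i; ring
    rw [h, integral_sub hIlu hU2, hintLU]
  have e2 : ∫ i, (U i - 1) ^ 2 ∂μ = ∫ i, (U i) ^ 2 ∂μ - N := by
    have h : (fun i => (U i - 1) ^ 2) = fun i => (U i) ^ 2 - 2 * U i + 1 := by
      funext i; ring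
    have hi1 : Integrable (fun i => U i ^ 2 - 2 * U i) μ := hU2.sub (hUintg.const_mul 2)
    rw [h, integral_add hi1 (integrable_const 1),
      integral_sub hU2 (hUintg.const_mul 2), integral_const_mul, hUint,
      integral_const, smul_eq_mul]
    show ∫ i, (U i) ^ 2 ∂μ - 2 * N + N * 1 = ∫ i, (U i) ^ 2 ∂μ - N
    ring
  rw [e1, e2]
  field_simp
  ring
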